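/- Every ω-splitting family is a Miller tree-splitting family, and every Miller tree-splitting family is a splitting family. -/

import Mathlib

/-- The restriction `f↾n` of `f : ω → ω`, as a finite sequence. -/
def res (f : ℕ → ℕ) (n : ℕ) : List ℕ := (List.range n).map f

/-- A tree on `ω`: a set of finite sequences closed under initial segments. -/
def IsTree (T : Set (List ℕ)) : Prop := ∀ s ∈ T, ∀ t, t <+: s → t ∈ T

/-- The successor set `suc_T(s) = {n : s⌢n ∈ T}`. -/
def sucT (T : Set (List ℕ)) (s : List ℕ) : Set ℕ := {n | s ++ [n] ∈ T}

/-- `f ∈ [T]` is a branch of `T`. -/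
def IsBranch (T : Set (List ℕ)) (f : ℕ → ℕ) : Prop := ∀ n, res f n ∈ T

/-- A Miller (superperfect) tree: a nonempty tree of strictly increasing sequences in
which every node extends to an infinitely-splitting node. -/
def IsMiller (p : Set (List ℕ)) : Prop :=
  p.Nonempty ∧ IsTree p ∧ (∀ s ∈ p, List.Chain' (· < ·) s) ∧
    ∀ s ∈ p, ∃ t ∈ p, s <+: t ∧ (sucT p t).Infinite

/-- The (infinitely-)splitting nodes of `p`. -/
def SplitNodes (p : Set (List ℕ)) : Set (List ℕ) := {s | s ∈ p ∧ (sucT p s).Infinite}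

/-- `Sp(p,f) = {f(n) : f↾n ∈ Split(p)}`. -/
def Sp (p : Set (List ℕ)) (f : ℕ → ℕ) : Set ℕ :=
  {m | ∃ n, res f n ∈ SplitNodes p ∧ f n = m}

/-- `[p]_split = {Sp(p,f) : f ∈ [p]}`. -/
def splitSets (p : Set (List ℕ)) : Set (Set ℕ) := {X | ∃ f, IsBranch p f ∧ X = Sp p f}

/-- `S` tree-splits the Miller tree `p`. -/
def TreeSplits (S : Set ℕ) (p : Set (List ℕ)) : Prop :=
  (∃ q, IsMiller q ∧ q ⊆ p ∧ ∀ X ∈ splitSets q, X.Infinite ∧ X ⊆ S) ∧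
  (∃ q, IsMiller q ∧ q ⊆ p ∧ ∀ X ∈ splitSets q, X.Infinite ∧ X ⊆ Set.univ \ S)

/-- `𝒮` is an `ω`-splitting family. -/
def IsOmegaSplitting (𝒮 : Set (Set ℕ)) : Prop :=
  ∀ X : ℕ → Set ℕ, (∀ n, (X n).Infinite) →
    ∃ S ∈ 𝒮, ∀ n, (X n ∩ S).Infinite ∧ (X n \ S).Infinite

/-- `𝒮` is a splitting family. -/
def IsSplittingFam (𝒮 : Set (Set ℕ)) : Prop :=
  ∀ X : Set ℕ, X.Infinite → ∃ S ∈ 𝒮, (X ∩ S).Infinite ∧ (X \ S).Infinite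

-- basic helpers
lemma res_succ (f : ℕ → ℕ) (n : ℕ) : res f (n+1) = res f n ++ [f n] := by
  simp [res, List.range_succ]

lemma res_length (f : ℕ → ℕ) (n : ℕ) : (res f n).length = n := by simp [res]

lemma res_prefix (f : ℕ → ℕ) {n m : ℕ} (h : n ≤ m) : res f n <+: res f m := by
  induction m with
  | zero => simpa using (Nat.le_zero.mp h) ▸ List.prefix_refl _
  | succ m ih =>
    rcases Nat.lt_or_ge n (m+1) with h' | h'
    · exact (ih (Nat.lt_succ_iff.mp h')).trans (by rw [res_succ]; exact List.prefix_append _ _)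
    · have : n = m + 1 := le_antisymm h h'
      subst this; exact List.prefix_refl _

lemma nil_mem_of_miller {p : Set (List ℕ)} (hp : IsMiller p) : [] ∈ p := by
  obtain ⟨s, hs⟩ := hp.1
  exact hp.2.1 s hs [] (List.nil_prefix)

lemma eq_of_prefix_of_length {l₁ l₂ l : List ℕ} (h₁ : l₁ <+: l) (h₂ : l₂ <+: l)
    (hl : l₁.length = l₂.length) : l₁ = l₂ :=
  List.IsPrefix.eq_of_length (List.prefix_of_prefix_length_le h₁ h₂ hl.le) hl

lemma snoc_eq_of_prefix {s : List ℕ} {m m' : ℕ} {l : List ℕ}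
    (h₁ : s ++ [m] <+: l) (h₂ : s ++ [m'] <+: l) : m = m' := by
  have := eq_of_prefix_of_length h₁ h₂ (by simp)
  simpa using this

lemma prefix_snoc_get {l l' : List ℕ} (h : l <+: l') (hlen : l.length < l'.length) :
    l ++ [l'[l.length]] <+: l' := by
  obtain ⟨r, rfl⟩ := h
  cases r with
  | nil => simp at hlen
  | cons a r =>
    have : (l ++ a :: r)[l.length] = a := by
      rw [List.getElem_append_right (le_refl l.length)]
      simp
    rw [this]
    simpa using (List.prefix_append _ r : l ++ [a] ++ r <+: _).symm ▸
      (⟨r, by simp⟩ : l ++ [a] <+: l ++ a :: r)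

lemma exists_meet : ∀ (c c' : List ℕ), ¬ c <+: c' → ¬ c' <+: c →
    ∃ d n n', n ≠ n' ∧ d ++ [n] <+: c ∧ d ++ [n'] <+: c' := by
  intro c
  induction c with
  | nil => intro c' h _; exact absurd (List.nil_prefix) h
  | cons a c ih =>
    intro c' h h'
    cases c' with
    | nil => exact absurd (List.nil_prefix) h'
    | cons a' c' =>
      by_cases hab : a = a'
      · subst hab
        have h1 : ¬ c <+: c' := fun hc => h (by simpa using hc)
        have h2 : ¬ c' <+: c := fun hc => h' (by simpa using hc)
        obtain ⟨d, n, n', hne, hd1, hd2⟩ := ih c' h1 h2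
        exact ⟨a :: d, n, n', hne, by simpa using hd1, by simpa using hd2⟩
      · exact ⟨[], a, a', hab, by simp, by simp⟩

namespace MillerAux

variable {p : Set (List ℕ)}

open Classical in
noncomputable def E (hp : IsMiller p) (s : List ℕ) : List ℕ :=
  if h : s ∈ p then (hp.2.2.2 s h).choose else []

lemma E_spec (hp : IsMiller p) {s : List ℕ} (hs : s ∈ p) :
    E hp s ∈ p ∧ s <+: E hp s ∧ (sucT p (E hp s)).Infinite := by
  rw [E, dif_pos hs]
  
  obtain ⟨h1, h2, h3⟩ := (hp.2.2.2 s hs).choose_spec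
  exact ⟨h1, h2, h3⟩

noncomputable def sig (hp : IsMiller p) (c : List ℕ) : List ℕ :=
  c.foldl (fun t n => E hp (t ++ [n])) (E hp [])

lemma sig_nil (hp : IsMiller p) : sig hp [] = E hp [] := rfl

lemma sig_append (hp : IsMiller p) (c : List ℕ) (n : ℕ) :
    sig hp (c ++ [n]) = E hp (sig hp c ++ [n]) := by
  simp [sig, List.foldl_append]

def Valid (hp : IsMiller p) (A : Set ℕ) (c : List ℕ) : Prop :=
  ∀ d n, d ++ [n] <+: c → sig hp d ++ [n] ∈ p ∧ n ∈ A

lemma valid_nil (hp : IsMiller p) (A : Set ℕ) : Valid hp A [] := by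
  intro d n h
  have := h.length_le
  simp at this
lemma valid_of_prefix {hp : IsMiller p} {A : Set ℕ} {c c' : List ℕ}
    (h : c <+: c') (hc' : Valid hp A c') : Valid hp A c :=
  fun d n hd => hc' d n (hd.trans h)

lemma valid_snoc {hp : IsMiller p} {A : Set ℕ} {c : List ℕ} {n : ℕ}
    (hc : Valid hp A c) (h1 : sig hp c ++ [n] ∈ p) (h2 : n ∈ A) : Valid hp A (c ++ [n]) := by
  intro d n' hd
  rcases List.prefix_concat_iff.mp hd with h | h
  · have hdc : d = c ∧ n' = n := by
      constructor
      · exact List.append_inj_left' h (by simp)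
      · simpa using List.append_inj_right' h (by simp)
    rcases hdc with ⟨rfl, rfl⟩
    exact ⟨h1, h2⟩
  · exact hc d n' h

lemma sig_split {hp : IsMiller p} {A : Set ℕ} {c : List ℕ} (hc : Valid hp A c) :
    sig hp c ∈ p ∧ (sucT p (sig hp c)).Infinite := by
  induction c using List.reverseRecOn with
  | nil =>
    obtain ⟨h1, _, h3⟩ := E_spec hp (nil_mem_of_miller hp)
    exact ⟨h1, h3⟩
  | append_singleton c n ih =>
    have hmem : sig hp c ++ [n] ∈ p := (hc c n (List.prefix_refl _)).1
    obtain ⟨h1, h2, h3⟩ := E_spec hp hmem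
    rw [sig_append]
    exact ⟨h1, h3⟩

lemma sig_mono {hp : IsMiller p} {A : Set ℕ} {c c' : List ℕ} (hc' : Valid hp A c')
    (h : c <+: c') : sig hp c <+: sig hp c' := by
  induction c' using List.reverseRecOn with
  | nil =>
    have := h.length_le; simp at this
    subst this
    exact List.prefix_refl _
  | append_singleton c' n ih =>
    rcases List.prefix_concat_iff.mp h with h | h
    · subst h; exact List.prefix_refl _
    · have h1 : sig hp c <+: sig hp c' :=
        ih (valid_of_prefix (List.prefix_append _ _) hc') h
      have hmem : sig hp c' ++ [n] ∈ p := (hc' c' n (List.prefix_refl _)).1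
      have h2 : sig hp c' ++ [n] <+: sig hp (c' ++ [n]) := by
        rw [sig_append]; exact (E_spec hp hmem).2.1
      exact h1.trans ((List.prefix_append _ _).trans h2)

lemma sig_snoc_prefix {hp : IsMiller p} {A : Set ℕ} {c d : List ℕ} {n : ℕ}
    (hc : Valid hp A c) (h : d ++ [n] <+: c) : sig hp d ++ [n] <+: sig hp c := by
  have h1 : sig hp d ++ [n] <+: sig hp (d ++ [n]) := by
    rw [sig_append]; exact (E_spec hp (hc d n h).1).2.1
  exact h1.trans (sig_mono hc h)

/-- The subtree generated by valid codes. -/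
def Q (hp : IsMiller p) (A : Set ℕ) : Set (List ℕ) :=
  {s | ∃ c, Valid hp A c ∧ s <+: sig hp c}


lemma branch_lem {hp : IsMiller p} {A : Set ℕ} {s : List ℕ} {m m' : ℕ}
    (h1 : s ++ [m] ∈ Q hp A) (h2 : s ++ [m'] ∈ Q hp A) (hne : m ≠ m') :
    m ∈ A ∧ ∃ d, Valid hp A d ∧ s = sig hp d := by
  obtain ⟨c, vc, hc⟩ := h1
  obtain ⟨c', vc', hc'⟩ := h2
  have hncc : ¬ c <+: c' := fun h =>
    hne (snoc_eq_of_prefix (hc.trans (sig_mono vc' h)) hc')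
  have hncc' : ¬ c' <+: c := fun h =>
    hne (snoc_eq_of_prefix hc (hc'.trans (sig_mono vc h)))
  obtain ⟨d, n, n', hnn, hd1, hd2⟩ := exists_meet c c' hncc hncc'
  have hs1 : sig hp d ++ [n] <+: sig hp c := sig_snoc_prefix vc hd1
  have hs2 : sig hp d ++ [n'] <+: sig hp c' := sig_snoc_prefix vc' hd2
  have hsc : s <+: sig hp c := (List.prefix_append _ _).trans hc
  have hsc' : s <+: sig hp c' := (List.prefix_append _ _).trans hc'
  rcases lt_trichotomy s.length (sig hp d).length with hl | hl | hl
  · exfalso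
    have e1 : s ++ [m] <+: sig hp d :=
      List.prefix_of_prefix_length_le hc ((List.prefix_append _ _).trans hs1)
        (by simpa using hl)
    have e2 : s ++ [m'] <+: sig hp d :=
      List.prefix_of_prefix_length_le hc' ((List.prefix_append _ _).trans hs2)
        (by simpa using hl)
    exact hne (snoc_eq_of_prefix e1 e2)
  · have hseq : s = sig hp d := eq_of_prefix_of_length hsc
      (((List.prefix_append _ _).trans hs1)) hl
    refine ⟨?_, d, valid_of_prefix ((List.prefix_append _ _).trans hd1) vc, hseq⟩
    have hmn : m = n := by
      apply snoc_eq_of_prefix hc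
      rw [hseq]; exact hs1
    rw [hmn]
    exact (vc d n hd1).2
  · exfalso
    have e1 : sig hp d ++ [n] <+: s :=
      List.prefix_of_prefix_length_le hs1 hsc (by simpa using hl)
    have e2 : sig hp d ++ [n'] <+: s :=
      List.prefix_of_prefix_length_le hs2 hsc' (by simpa using hl)
    exact hnn (snoc_eq_of_prefix e1 e2)

lemma sucT_Q {hp : IsMiller p} {A : Set ℕ}
    (hA : ∀ t ∈ SplitNodes p, (sucT p t ∩ A).Infinite)
    {d : List ℕ} (hd : Valid hp A d) :
    sucT p (sig hp d) ∩ A ⊆ sucT (Q hp A) (sig hp d) := by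
  rintro n ⟨hn1, hn2⟩
  exact ⟨d ++ [n], valid_snoc hd hn1 hn2,
    by rw [sig_append]; exact (E_spec hp hn1).2.1⟩

lemma signode_split {hp : IsMiller p} {A : Set ℕ}
    (hA : ∀ t ∈ SplitNodes p, (sucT p t ∩ A).Infinite)
    {d : List ℕ} (hd : Valid hp A d) : sig hp d ∈ SplitNodes (Q hp A) := by
  refine ⟨⟨d, hd, List.prefix_refl _⟩, ?_⟩
  exact (hA _ ⟨(sig_split hd).1, (sig_split hd).2⟩).mono (sucT_Q hA hd)

lemma Q_tree (hp : IsMiller p) (A : Set ℕ) : IsTree (Q hp A) := by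
  rintro s ⟨c, vc, hc⟩ t ht
  exact ⟨c, vc, ht.trans hc⟩

lemma Q_sub (hp : IsMiller p) (A : Set ℕ) : Q hp A ⊆ p := by
  rintro s ⟨c, vc, hc⟩
  exact hp.2.1 _ (sig_split vc).1 s hc

lemma Q_miller {hp : IsMiller p} {A : Set ℕ}
    (hA : ∀ t ∈ SplitNodes p, (sucT p t ∩ A).Infinite) : IsMiller (Q hp A) := by
  refine ⟨⟨sig hp [], [], valid_nil hp A, List.prefix_refl _⟩, Q_tree hp A,
    fun s hs => hp.2.2.1 s (Q_sub hp A hs), ?_⟩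
  rintro s ⟨c, vc, hc⟩
  exact ⟨sig hp c, (signode_split hA vc).1, hc, (signode_split hA vc).2⟩

lemma hits {hp : IsMiller p} {A : Set ℕ} {f : ℕ → ℕ}
    (hf : IsBranch (Q hp A) f) (n : ℕ) :
    ∃ m, n ≤ m ∧ ∃ d, Valid hp A d ∧ res f m = sig hp d := by
  obtain ⟨c, vc, hc⟩ := hf n
  set L := (sig hp c).length with hL
  have hnL : n ≤ L := by simpa [res_length] using hc.length_le
  by_cases hcase : res f L = sig hp c
  · exact ⟨L, hnL, c, vc, hcase⟩
  · have hex : ∃ j, ¬ res f j <+: sig hp c := by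
      refine ⟨L, fun h => hcase (List.IsPrefix.eq_of_length h (by simp [res_length, hL]))⟩
    classical
    set j₀ := Nat.find hex with hj₀
    have hj₀spec := Nat.find_spec hex
    have hj₀pos : n < j₀ := by
      by_contra h
      push_neg at h
      exact hj₀spec ((res_prefix f h).trans hc)
    set k := j₀ - 1 with hkdef
    have hk : k + 1 = j₀ := Nat.succ_pred_eq_of_pos (Nat.lt_of_le_of_lt (Nat.zero_le n) hj₀pos)
    have hkpre : res f k <+: sig hp c := of_not_not (Nat.find_min hex (by rw [← hj₀]; omega))
    have hknk : n ≤ k := by omega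
    have hknot : ¬ res f (k+1) <+: sig hp c := hk ▸ hj₀spec
    have hkL : k < L := by
      have hle : k ≤ L := by simpa [res_length] using hkpre.length_le
      rcases eq_or_lt_of_le hle with h | h
      · exact absurd (List.IsPrefix.eq_of_length (h ▸ hkpre) (by simp [res_length, h, hL])) hcase
      · exact h
    have hlen : (res f k).length < (sig hp c).length := by rw [res_length]; exact hkL
    have hb := prefix_snoc_get hkpre hlen
    set b := (sig hp c)[(res f k).length] with hbdef
    have hfb : f k ≠ b := by
      intro h
      exact hknot (by rw [res_succ, h]; exact hb)
    have hq1 : res f k ++ [f k] ∈ Q hp A := by rw [← res_succ]; exact hf (k+1)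
    have hq2 : res f k ++ [b] ∈ Q hp A := ⟨c, vc, hb⟩
    obtain ⟨_, d, vd, hd⟩ := branch_lem hq1 hq2 hfb
    exact ⟨k, hknk, d, vd, hd⟩

lemma main {p : Set (List ℕ)} (hp : IsMiller p) (A : Set ℕ)
    (hA : ∀ t ∈ SplitNodes p, (sucT p t ∩ A).Infinite) :
    ∃ q, IsMiller q ∧ q ⊆ p ∧ ∀ X ∈ splitSets q, X.Infinite ∧ X ⊆ A := by
  refine ⟨Q hp A, Q_miller hA, Q_sub hp A, ?_⟩
  rintro X ⟨f, hf, rfl⟩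
  have hmono : StrictMono f := by
    intro i j hij
    have hchain : List.Chain' (· < ·) (res f (j+1)) := hp.2.2.1 _ (Q_sub hp A (hf (j+1)))
    have hpw := List.isChain_iff_pairwise.mp hchain
    have := List.pairwise_iff_getElem.mp hpw i j
      (by simp [res_length]; omega) (by simp [res_length]) hij
    simpa [res] using this
  constructor
  · have hN : {n | res f n ∈ SplitNodes (Q hp A)}.Infinite := by
      apply Set.infinite_of_forall_exists_gt
      intro a
      obtain ⟨m, hm, d, vd, hd⟩ := hits hf (a+1)
      exact ⟨m, by rw [Set.mem_setOf_eq, hd]; exact signode_split hA vd, by omega⟩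
    have heq : Sp (Q hp A) f = f '' {n | res f n ∈ SplitNodes (Q hp A)} := by
      ext m
      constructor
      · rintro ⟨n, hn, rfl⟩; exact ⟨n, hn, rfl⟩
      · rintro ⟨n, hn, rfl⟩; exact ⟨n, hn, rfl⟩
    rw [heq]
    exact hN.image (hmono.injective.injOn)
  · rintro m ⟨n, hn, rfl⟩
    have h1 : res f n ++ [f n] ∈ Q hp A := by rw [← res_succ]; exact hf (n+1)
    obtain ⟨m₂, hm₂⟩ := (hn.2.diff (Set.finite_singleton (f n))).nonempty
    have hne : f n ≠ m₂ := fun h => hm₂.2 (by simp [h])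
    exact (branch_lem h1 hm₂.1 hne).1

section BranchExists

variable {q : Set (List ℕ)}

noncomputable def nxt (hq : IsMiller q) (s : List ℕ) (hs : s ∈ q) : List ℕ :=
  (hq.2.2.2 s hs).choose ++ [(hq.2.2.2 s hs).choose_spec.2.2.nonempty.choose]

lemma nxt_spec (hq : IsMiller q) {s : List ℕ} (hs : s ∈ q) :
    nxt hq s hs ∈ q ∧ s <+: nxt hq s hs ∧ s.length < (nxt hq s hs).length := by
  obtain ⟨h1, h2, h3⟩ := (hq.2.2.2 s hs).choose_spec
  have hn := h3.nonempty.choose_spec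
  refine ⟨hn, h2.trans (List.prefix_append _ _), ?_⟩
  have := h2.length_le
  simp only [nxt, List.length_append, List.length_cons, List.length_nil]
  omega

noncomputable def gseq (hq : IsMiller q) : ℕ → {s : List ℕ // s ∈ q}
  | 0 => ⟨[], nil_mem_of_miller hq⟩
  | k+1 => ⟨nxt hq (gseq hq k).1 (gseq hq k).2, (nxt_spec hq (gseq hq k).2).1⟩

lemma gseq_len (hq : IsMiller q) : ∀ k, k ≤ ((gseq hq k).1).length := by
  intro k
  induction k with
  | zero => simp
  | succ k ih =>
    have := (nxt_spec hq (gseq hq k).2).2.2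
    have h2 : (gseq hq (k+1)).1 = nxt hq (gseq hq k).1 (gseq hq k).2 := rfl
    rw [h2]
    omega

lemma gseq_prefix (hq : IsMiller q) (k : ℕ) : ((gseq hq k).1) <+: ((gseq hq (k+1)).1) :=
  (nxt_spec hq (gseq hq k).2).2.1

lemma exists_branch (hq : IsMiller q) : ∃ f, IsBranch q f := by
  classical
  set f : ℕ → ℕ := fun i => ((gseq hq (i+1)).1).getD i 0 with hfdef
  have key : ∀ n, res f n = ((gseq hq n).1).take n := by
    intro n
    induction n with
    | zero => simp [res]
    | succ n ih =>
      have hlen : n < ((gseq hq (n+1)).1).length :=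
        lt_of_lt_of_le (Nat.lt_succ_self n) (gseq_len hq (n+1))
      have hfn : f n = ((gseq hq (n+1)).1)[n] := by
        rw [hfdef]; exact List.getD_eq_getElem _ _ hlen
      have h1 : ((gseq hq (n+1)).1).take (n+1)
          = ((gseq hq (n+1)).1).take n ++ [((gseq hq (n+1)).1)[n]] := by
        rw [List.take_succ, List.getElem?_eq_getElem hlen]
        simp
      have h2 : ((gseq hq (n+1)).1).take n = ((gseq hq n).1).take n := by
        obtain ⟨r, hr⟩ := gseq_prefix hq n
        rw [← hr, List.take_append_of_le_length (gseq_len hq n)]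
      rw [res_succ, ih, h1, h2, hfn]
    
  exact ⟨f, fun n => hq.2.1 _ (gseq hq n).2 _ ((key n) ▸ List.take_prefix n _)⟩

end BranchExists

end MillerAux

lemma le_foldr_max : ∀ (s : List ℕ), ∀ x ∈ s, x ≤ s.foldr max 0 := by
  intro s
  induction s with
  | nil => simp
  | cons a s ih =>
    intro x hx
    rcases List.mem_cons.mp hx with rfl | hx
    · simp [le_max_left]
    · exact le_trans (ih x hx) (by simp [le_max_right])

/-- The full tree of strictly increasing sequences with entries in `X`. -/
lemma incTree_miller {X : Set ℕ} (hX : X.Infinite) :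
    IsMiller {s : List ℕ | List.Chain' (· < ·) s ∧ ∀ x ∈ s, x ∈ X} := by
  set p := {s : List ℕ | List.Chain' (· < ·) s ∧ ∀ x ∈ s, x ∈ X} with hpdef
  have htree : IsTree p := by
    rintro s ⟨hs1, hs2⟩ t ht
    refine ⟨List.isChain_iff_pairwise.mpr ((List.isChain_iff_pairwise.mp hs1).sublist ht.sublist), ?_⟩
    exact fun x hx => hs2 x (ht.sublist.subset hx)
  refine ⟨⟨[], by simp [hpdef]; exact List.isChain_nil⟩, htree, fun s hs => hs.1, ?_⟩
  intro s hs
  refine ⟨s, hs, List.prefix_refl _, ?_⟩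
  set B := s.foldr max 0 with hBdef
  have hsub : X \ Set.Iic B ⊆ sucT p s := by
    rintro n ⟨hn1, hn2⟩
    simp only [Set.mem_Iic, not_le] at hn2
    constructor
    · show List.IsChain (· < ·) (s ++ [n])
      rw [List.isChain_append]
      refine ⟨hs.1, List.isChain_singleton n, ?_⟩
      intro x hx y hy
      simp only [List.head?_cons, Option.mem_def, Option.some.injEq] at hy
      subst hy
      have hxs : x ∈ s := List.mem_of_mem_getLast? hx
      exact lt_of_le_of_lt (le_foldr_max s x hxs) hn2
    · intro x hx
      rcases List.mem_append.mp hx with h | h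
      · exact hs.2 x h
      · simp at h; subst h; exact hn1
  exact (hX.diff (Set.finite_Iic B)).mono hsub


/-- Every `ω`-splitting family is Miller tree-splitting, and every Miller
tree-splitting family is splitting. -/
theorem stmt12 (𝒮 : Set (Set ℕ)) (h𝒮 : ∀ S ∈ 𝒮, S.Infinite) :
    (IsOmegaSplitting 𝒮 → ∀ p, IsMiller p → ∃ S ∈ 𝒮, TreeSplits S p) ∧
    ((∀ p, IsMiller p → ∃ S ∈ 𝒮, TreeSplits S p) → IsSplittingFam 𝒮) := by
  constructor
  · intro hω p hpM
    have hSN : (SplitNodes p).Nonempty := by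
      obtain ⟨t, ht, _, hinf⟩ := hpM.2.2.2 [] (nil_mem_of_miller hpM)
      exact ⟨t, ht, hinf⟩
    obtain ⟨e, he⟩ := (Set.to_countable (SplitNodes p)).exists_eq_range hSN
    have hXinf : ∀ n, (sucT p (e n)).Infinite := by
      intro n
      have : e n ∈ SplitNodes p := he ▸ Set.mem_range_self n
      exact this.2
    obtain ⟨S, hS, hsplit⟩ := hω (fun n => sucT p (e n)) hXinf
    refine ⟨S, hS, ?_, ?_⟩
    · apply MillerAux.main hpM S
      intro t ht
      obtain ⟨n, rfl⟩ := he ▸ ht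
      exact (hsplit n).1
    · apply MillerAux.main hpM (Set.univ \ S)
      intro t ht
      obtain ⟨n, rfl⟩ := he ▸ ht
      have : sucT p (e n) ∩ (Set.univ \ S) = sucT p (e n) \ S := by
        ext x; simp
      rw [this]
      exact (hsplit n).2
  · intro hT X hX
    obtain ⟨S, hS, ⟨q0, hq0M, hq0sub, hq0prop⟩, ⟨q1, hq1M, hq1sub, hq1prop⟩⟩ :=
      hT _ (incTree_miller hX)
    refine ⟨S, hS, ?_, ?_⟩
    · obtain ⟨f, hf⟩ := MillerAux.exists_branch hq0M
      obtain ⟨hinf, hsub⟩ := hq0prop (Sp q0 f) ⟨f, hf, rfl⟩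
      refine hinf.mono ?_
      rintro m ⟨n, hn, rfl⟩
      refine ⟨?_, hsub ⟨n, hn, rfl⟩⟩
      have hmem := hq0sub (hf (n+1))
      exact hmem.2 (f n) (by rw [res_succ]; simp)
    · obtain ⟨f, hf⟩ := MillerAux.exists_branch hq1M
      obtain ⟨hinf, hsub⟩ := hq1prop (Sp q1 f) ⟨f, hf, rfl⟩
      refine hinf.mono ?_
      rintro m ⟨n, hn, rfl⟩
      refine ⟨?_, (hsub ⟨n, hn, rfl⟩).2⟩
      have hmem := hq1sub (hf (n+1))
      exact hmem.2 (f n) (by rw [res_succ]; simp)
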